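/- arXiv:1808.03345 — 2 statements merged into one kernel-verified Lean document; each statement's English description precedes it below -/
import Mathlib

section
/- Any two η₁-ordered sets of cardinality ℵ₁ are order-isomorphic. -/
open Cardinal Set

section EtaOne

variable {L M : Type*} [LinearOrder L] [LinearOrder M]

/-- `G` is the graph of a partial order isomorphism. -/
def EtaGraph (G : Set (L × M)) : Prop :=
  ∀ p ∈ G, ∀ q ∈ G, (p.1 < q.1 ↔ p.2 < q.2)

lemma EtaGraph.eq_snd {G : Set (L × M)} (hG : EtaGraph G) {p q : L × M} (hp : p ∈ G)
    (hq : q ∈ G) (h : p.1 = q.1) : p.2 = q.2 := by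
  rcases lt_trichotomy p.2 q.2 with h' | h' | h'
  · exact absurd ((hG p hp q hq).mpr h') (by simp [h])
  · exact h'
  · exact absurd ((hG q hq p hp).mpr h') (by simp [h])

lemma etaGraph_insert {G : Set (L × M)} (hG : EtaGraph G) {x : L} {y : M}
    (h : ∀ r ∈ G, (x < r.1 ↔ y < r.2) ∧ (r.1 < x ↔ r.2 < y)) :
    EtaGraph (insert (x, y) G) := by
  intro p hp q hq
  rcases hp with hp | hp <;> rcases hq with hq | hq
  · subst hp; subst hq; simp
  · subst hp; exact (h q hq).1
  · subst hq; exact (h p hp).2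
  · exact hG p hp q hq

lemma exists_extR
    (hM : ∀ A B : Set M, A.Countable → B.Countable → (∀ a ∈ A, ∀ b ∈ B, a < b) →
      ∃ y : M, (∀ a ∈ A, a < y) ∧ (∀ b ∈ B, y < b))
    {G : Set (L × M)} (hG : EtaGraph G) (hGc : G.Countable) (x : L) :
    ∃ y, EtaGraph (insert (x, y) G) := by
  by_cases hx : ∃ p ∈ G, p.1 = x
  · obtain ⟨p, hp, hpx⟩ := hx
    refine ⟨p.2, etaGraph_insert hG fun r hr => ?_⟩
    constructor
    · rw [← hpx]; exact hG p hp r hr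
    · rw [← hpx]; exact hG r hr p hp
  · push_neg at hx
    set A : Set M := Prod.snd '' {p ∈ G | p.1 < x} with hA
    set B : Set M := Prod.snd '' {p ∈ G | x < p.1} with hB
    have hAc : A.Countable := (hGc.mono (sep_subset _ _)).image _
    have hBc : B.Countable := (hGc.mono (sep_subset _ _)).image _
    have hAB : ∀ a ∈ A, ∀ b ∈ B, a < b := by
      rintro a ⟨p, ⟨hp, hpx⟩, rfl⟩ b ⟨q, ⟨hq, hqx⟩, rfl⟩
      exact (hG p hp q hq).mp (hpx.trans hqx)
    obtain ⟨y, hy1, hy2⟩ := hM A B hAc hBc hAB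
    refine ⟨y, etaGraph_insert hG fun r hr => ?_⟩
    have hlt : r.1 < x → r.2 < y := fun h => hy1 _ ⟨r, ⟨hr, h⟩, rfl⟩
    have hgt : x < r.1 → y < r.2 := fun h => hy2 _ ⟨r, ⟨hr, h⟩, rfl⟩
    have hne : r.1 ≠ x := hx r hr
    constructor
    · refine ⟨hgt, fun h => ?_⟩
      rcases lt_trichotomy x r.1 with h' | h' | h'
      · exact h'
      · exact absurd h'.symm hne
      · exact absurd (hlt h') (asymm h)
    · refine ⟨hlt, fun h => ?_⟩
      rcases lt_trichotomy r.1 x with h' | h' | h'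
      · exact h'
      · exact absurd h' hne
      · exact absurd (hgt h') (asymm h)

lemma exists_extL
    (hL : ∀ A B : Set L, A.Countable → B.Countable → (∀ a ∈ A, ∀ b ∈ B, a < b) →
      ∃ y : L, (∀ a ∈ A, a < y) ∧ (∀ b ∈ B, y < b))
    {G : Set (L × M)} (hG : EtaGraph G) (hGc : G.Countable) (y : M) :
    ∃ x, EtaGraph (insert (x, y) G) := by
  by_cases hy : ∃ p ∈ G, p.2 = y
  · obtain ⟨p, hp, hpy⟩ := hy
    refine ⟨p.1, etaGraph_insert hG fun r hr => ?_⟩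
    constructor
    · rw [← hpy]; exact hG p hp r hr
    · rw [← hpy]; exact hG r hr p hp
  · push_neg at hy
    set A : Set L := Prod.fst '' {p ∈ G | p.2 < y} with hA
    set B : Set L := Prod.fst '' {p ∈ G | y < p.2} with hB
    have hAc : A.Countable := (hGc.mono (sep_subset _ _)).image _
    have hBc : B.Countable := (hGc.mono (sep_subset _ _)).image _
    have hAB : ∀ a ∈ A, ∀ b ∈ B, a < b := by
      rintro a ⟨p, ⟨hp, hpy⟩, rfl⟩ b ⟨q, ⟨hq, hqy⟩, rfl⟩
      exact (hG p hp q hq).mpr (hpy.trans hqy)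
    obtain ⟨x, hx1, hx2⟩ := hL A B hAc hBc hAB
    refine ⟨x, etaGraph_insert hG fun r hr => ?_⟩
    have hlt : r.2 < y → r.1 < x := fun h => hx1 _ ⟨r, ⟨hr, h⟩, rfl⟩
    have hgt : y < r.2 → x < r.1 := fun h => hx2 _ ⟨r, ⟨hr, h⟩, rfl⟩
    have hne : r.2 ≠ y := hy r hr
    constructor
    · refine ⟨fun h => ?_, hgt⟩
      rcases lt_trichotomy y r.2 with h' | h' | h'
      · exact h'
      · exact absurd h'.symm hne
      · exact absurd (hlt h') (asymm h)
    · refine ⟨fun h => ?_, hlt⟩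
      rcases lt_trichotomy r.2 y with h' | h' | h'
      · exact h'
      · exact absurd h' hne
      · exact absurd (hgt h') (asymm h)

variable (hL : ∀ A B : Set L, A.Countable → B.Countable → (∀ a ∈ A, ∀ b ∈ B, a < b) →
      ∃ y : L, (∀ a ∈ A, a < y) ∧ (∀ b ∈ B, y < b))
  (hM : ∀ A B : Set M, A.Countable → B.Countable → (∀ a ∈ A, ∀ b ∈ B, a < b) →
      ∃ y : M, (∀ a ∈ A, a < y) ∧ (∀ b ∈ B, y < b))

open Classical in
/-- One step of the back-and-forth: extend the graph `G` to cover `x` and `y`. -/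
noncomputable def etaStep (G : Set (L × M)) (x : L) (y : M) : Set (L × M) :=
  if h : EtaGraph G ∧ G.Countable then
    insert ((exists_extL hL (exists_extR hM h.1 h.2 x).choose_spec (h.2.insert _) y).choose, y)
      (insert (x, (exists_extR hM h.1 h.2 x).choose) G)
  else G

lemma subset_etaStep (G : Set (L × M)) (x : L) (y : M) : G ⊆ etaStep hL hM G x y := by
  unfold etaStep
  split
  · exact (subset_insert _ _).trans (subset_insert _ _)
  · exact subset_rfl

lemma etaStep_spec {G : Set (L × M)} (h : EtaGraph G ∧ G.Countable) (x : L) (y : M) :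
    EtaGraph (etaStep hL hM G x y) ∧ (etaStep hL hM G x y).Countable ∧
      (∃ b, (x, b) ∈ etaStep hL hM G x y) ∧ (∃ a, (a, y) ∈ etaStep hL hM G x y) := by
  unfold etaStep
  rw [dif_pos h]
  exact ⟨(exists_extL hL (exists_extR hM h.1 h.2 x).choose_spec (h.2.insert _) y).choose_spec,
    ((h.2.insert _).insert _),
    ⟨_, mem_insert_iff.mpr (Or.inr (mem_insert _ _))⟩, ⟨_, mem_insert _ _⟩⟩

/-- The transfinite back-and-forth construction, indexed by the initial ordinal of `ℵ₁`. -/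
noncomputable def etaF (eL : (Cardinal.aleph 1).ord.ToType ≃ L)
    (eM : (Cardinal.aleph 1).ord.ToType ≃ M) :
    (Cardinal.aleph 1).ord.ToType → Set (L × M) :=
  wellFounded_lt.fix fun o ih =>
    etaStep hL hM (⋃ p : Iio o, ih p.1 p.2) (eL o) (eM o)

lemma etaF_eq (eL : (Cardinal.aleph 1).ord.ToType ≃ L)
    (eM : (Cardinal.aleph 1).ord.ToType ≃ M) (o : (Cardinal.aleph 1).ord.ToType) :
    etaF hL hM eL eM o
      = etaStep hL hM (⋃ p : Iio o, etaF hL hM eL eM p.1) (eL o) (eM o) :=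
  wellFounded_lt.fix_eq _ o

lemma etaF_spec (eL : (Cardinal.aleph 1).ord.ToType ≃ L)
    (eM : (Cardinal.aleph 1).ord.ToType ≃ M) (o : (Cardinal.aleph 1).ord.ToType) :
    EtaGraph (etaF hL hM eL eM o) ∧ (etaF hL hM eL eM o).Countable ∧
      (∃ b, (eL o, b) ∈ etaF hL hM eL eM o) ∧ (∃ a, (a, eM o) ∈ etaF hL hM eL eM o) ∧
      ∀ p, p < o → etaF hL hM eL eM p ⊆ etaF hL hM eL eM o := by
  induction o using WellFoundedLT.induction with
  | _ o ih =>
  set U : Set (L × M) := ⋃ p : Iio o, etaF hL hM eL eM p.1 with hU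
  have hmono : ∀ p q : (Cardinal.aleph 1).ord.ToType, p ≤ q → q < o →
      etaF hL hM eL eM p ⊆ etaF hL hM eL eM q := by
    intro p q hpq hq
    rcases eq_or_lt_of_le hpq with rfl | hpq
    · exact subset_rfl
    · exact (ih q hq).2.2.2.2 p hpq
  have hUsub : ∀ p : Iio o, etaF hL hM eL eM p.1 ⊆ U := fun p =>
    subset_iUnion (fun p : Iio o => etaF hL hM eL eM p.1) p
  have hUG : EtaGraph U := by
    intro p hp q hq
    obtain ⟨_, ⟨⟨r, rfl⟩, hp⟩⟩ := hp
    obtain ⟨_, ⟨⟨s, rfl⟩, hq⟩⟩ := hq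
    rcases le_total r.1 s.1 with h | h
    · exact (ih s.1 s.2).1 p (hmono r.1 s.1 h s.2 hp) q hq
    · exact (ih r.1 r.2).1 p hp q (hmono s.1 r.1 h r.2 hq)
  have hIio : Countable (Iio o) := by
    have := Cardinal.mk_Iio_ord_toType o
    exact ((Cardinal.countable_iff_lt_aleph_one _).mpr this).to_subtype
  have hUc : U.Countable := countable_iUnion fun p => (ih p.1 p.2).2.1
  have key := etaStep_spec hL hM ⟨hUG, hUc⟩ (eL o) (eM o)
  rw [← etaF_eq hL hM eL eM o] at key
  refine ⟨key.1, key.2.1, key.2.2.1, key.2.2.2, fun p hp => ?_⟩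
  refine (hUsub ⟨p, hp⟩).trans ?_
  rw [etaF_eq hL hM eL eM o]
  exact subset_etaStep hL hM U (eL o) (eM o)

end EtaOne

/-- Any two η₁-ordered sets of cardinality ℵ₁ are order-isomorphic. -/
theorem eta_one_aleph_one_unique
    (L M : Type*) [LinearOrder L] [LinearOrder M]
    (hL : ∀ A B : Set L, A.Countable → B.Countable → (∀ a ∈ A, ∀ b ∈ B, a < b) →
      ∃ y : L, (∀ a ∈ A, a < y) ∧ (∀ b ∈ B, y < b))
    (hM : ∀ A B : Set M, A.Countable → B.Countable → (∀ a ∈ A, ∀ b ∈ B, a < b) →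
      ∃ y : M, (∀ a ∈ A, a < y) ∧ (∀ b ∈ B, y < b))
    (hcardL : Cardinal.mk L = Cardinal.aleph 1)
    (hcardM : Cardinal.mk M = Cardinal.aleph 1) :
    Nonempty (L ≃o M) := by
  classical
  have hO : Cardinal.mk (Cardinal.aleph 1).ord.ToType = Cardinal.aleph 1 :=
    Cardinal.mk_ord_toType _
  obtain ⟨eL⟩ := Cardinal.eq.mp (hO.trans hcardL.symm)
  have key : Nonempty ((Cardinal.aleph 1).ord.ToType ≃ M) := by
    rw [← Cardinal.lift_mk_eq', hO, hcardM, Cardinal.lift_aleph, Cardinal.lift_aleph]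
    simp
  obtain ⟨eM⟩ := key
  set G : Set (L × M) := ⋃ o, etaF hL hM eL eM o with hG
  have hmono : ∀ p q, p ≤ q → etaF hL hM eL eM p ⊆ etaF hL hM eL eM q := by
    intro p q hpq
    rcases eq_or_lt_of_le hpq with rfl | hpq
    · exact subset_rfl
    · exact (etaF_spec hL hM eL eM q).2.2.2.2 p hpq
  have hGG : EtaGraph G := by
    intro p hp q hq
    obtain ⟨_, ⟨⟨r, rfl⟩, hp⟩⟩ := hp
    obtain ⟨_, ⟨⟨s, rfl⟩, hq⟩⟩ := hq
    rcases le_total r s with h | h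
    · exact (etaF_spec hL hM eL eM s).1 p (hmono r s h hp) q hq
    · exact (etaF_spec hL hM eL eM r).1 p hp q (hmono s r h hq)
  have hex : ∀ x : L, ∃ b, (x, b) ∈ G := by
    intro x
    obtain ⟨b, hb⟩ := (etaF_spec hL hM eL eM (eL.symm x)).2.2.1
    rw [eL.apply_symm_apply] at hb
    exact ⟨b, Set.mem_iUnion.mpr ⟨_, hb⟩⟩
  have hexM : ∀ y : M, ∃ a, (a, y) ∈ G := by
    intro y
    obtain ⟨a, ha⟩ := (etaF_spec hL hM eL eM (eM.symm y)).2.2.2.1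
    rw [eM.apply_symm_apply] at ha
    exact ⟨a, Set.mem_iUnion.mpr ⟨_, ha⟩⟩
  choose f hf using hex
  have hmonof : StrictMono f := fun x x' h => (hGG (x, f x) (hf x) (x', f x') (hf x')).mp h
  have hsurj : Function.Surjective f := by
    intro y
    obtain ⟨a, ha⟩ := hexM y
    exact ⟨a, hGG.eq_snd (hf a) ha rfl⟩
  exact ⟨StrictMono.orderIsoOfSurjective f hmonof hsurj⟩
end

section
/- There exist two strictly increasing functions f, g : ℝ⁺ → ℝ⁺, both tending to +∞, such that f(x)/g(x) has no limit (finite or infinite) as x → ∞; hence the infinities of increasing functions tending to infinity are not totally ordered by du Bois-Reymond's comparison (the Stolz–Pincherle–Cantor incomparability result). -/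
open Filter Real

-- helper: positivity of 2 + sin a + cos a
lemma aux_pos (a : ℝ) : 0 < 2 + Real.sin a + Real.cos a := by
  nlinarith [Real.sin_sq_add_cos_sq a, Real.neg_one_le_sin a, Real.neg_one_le_cos a,
    sq_nonneg (Real.sin a + Real.cos a + 2), sq_nonneg (Real.sin a - Real.cos a)]

lemma aux_deriv {x : ℝ} (hx : 0 < x) :
    HasDerivAt (fun x : ℝ => x * (2 + Real.sin (Real.log x)))
      (2 + Real.sin (Real.log x) + Real.cos (Real.log x)) x := by
  have hlog : HasDerivAt Real.log x⁻¹ x := Real.hasDerivAt_log hx.ne'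
  have hsin : HasDerivAt (fun x : ℝ => Real.sin (Real.log x))
      (Real.cos (Real.log x) * x⁻¹) x := (Real.hasDerivAt_sin _).comp x hlog
  have h2 : HasDerivAt (fun x : ℝ => 2 + Real.sin (Real.log x))
      (Real.cos (Real.log x) * x⁻¹) x := by
    exact hsin.const_add 2
  have := (hasDerivAt_id x).mul h2
  have hxne : x ≠ 0 := hx.ne'
  convert this using 1
  · rfl
  · rfl
  · rfl
  simp only [id_eq, one_mul]
  rw [mul_comm (Real.cos (Real.log x)), ← mul_assoc, mul_inv_cancel₀ hxne, one_mul]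



lemma aux_mono : StrictMonoOn (fun x : ℝ => x * (2 + Real.sin (Real.log x))) (Set.Ioi 0) := by
  apply strictMonoOn_of_deriv_pos (convex_Ioi 0)
  · intro x hx
    exact (aux_deriv hx).continuousAt.continuousWithinAt
  · intro x hx
    rw [interior_Ioi] at hx
    rw [(aux_deriv hx).deriv]
    exact aux_pos _

lemma aux_hr : ∀ᶠ x : ℝ in atTop,
    x / (x * (2 + Real.sin (Real.log x))) = (2 + Real.sin (Real.log x))⁻¹ := by
  filter_upwards [eventually_gt_atTop (0:ℝ)] with x hx
  rw [div_mul_eq_div_div, div_self hx.ne', one_div]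

lemma aux_one_le (x : ℝ) : (1:ℝ) ≤ 2 + Real.sin x := by
  nlinarith [Real.neg_one_le_sin x]

/-- There exist strictly increasing positive functions tending to +∞ whose ratio
has no limit, finite or infinite (Stolz–Pincherle–Cantor incomparability). -/
theorem exists_incomparable_increasing_functions :
    ∃ f g : ℝ → ℝ,
      (∀ x > (0:ℝ), 0 < f x) ∧ (∀ x > (0:ℝ), 0 < g x) ∧
      StrictMonoOn f (Set.Ioi 0) ∧ StrictMonoOn g (Set.Ioi 0) ∧
      Tendsto f atTop atTop ∧ Tendsto g atTop atTop ∧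
      ¬(∃ l : ℝ, Tendsto (fun x => f x / g x) atTop (nhds l)) ∧
      ¬Tendsto (fun x => f x / g x) atTop atTop ∧
      ¬Tendsto (fun x => f x / g x) atTop atBot := by
  refine ⟨fun x => x, fun x => x * (2 + Real.sin (Real.log x)), ?_, ?_, ?_, ?_, ?_, ?_, ?_, ?_, ?_⟩
  · exact fun x hx => hx
  · intro x hx
    have h1 := aux_one_le (Real.log x)
    positivity
  · exact fun a _ b _ h => h
  · exact aux_mono
  · exact tendsto_id
  · apply tendsto_atTop_mono' atTop (show ∀ᶠ x in atTop, x ≤ x * (2 + Real.sin (Real.log x)) from ?_) tendsto_id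
    filter_upwards [eventually_gt_atTop (0:ℝ)] with x hx
    nlinarith [Real.neg_one_le_sin (Real.log x)]
  · rintro ⟨l, hl⟩
    have hsub : ∀ c : ℝ, Tendsto (fun n : ℕ => Real.exp (c + n * (2 * Real.pi))) atTop atTop := by
      intro c
      apply Real.tendsto_exp_atTop.comp
      apply tendsto_atTop_add_const_left
      exact tendsto_natCast_atTop_atTop.atTop_mul_const Real.two_pi_pos
    have key : ∀ c : ℝ, l = (2 + Real.sin c)⁻¹ := by
      intro c
      have h1 := hl.comp (hsub c)
      have h2 : (fun n : ℕ => (fun x : ℝ => x / (x * (2 + Real.sin (Real.log x)))) (Real.exp (c + n * (2 * Real.pi))))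
          =ᶠ[atTop] (fun _ => (2 + Real.sin c)⁻¹) := by
        apply Eventually.of_forall
        intro n
        have hx : (0:ℝ) < Real.exp (c + n * (2 * Real.pi)) := Real.exp_pos _
        simp only
        rw [div_mul_eq_div_div, div_self hx.ne', one_div,
          Real.log_exp, Real.sin_add_nat_mul_two_pi]
      exact tendsto_nhds_unique (h1.congr' h2) tendsto_const_nhds
    have e1 := key (Real.pi / 2)
    have e2 := key (-(Real.pi / 2))
    rw [Real.sin_pi_div_two] at e1
    rw [Real.sin_neg, Real.sin_pi_div_two] at e2
    norm_num at e1 e2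
    linarith
  · intro h
    have hb : ∀ᶠ x : ℝ in atTop, False := by
      filter_upwards [(h.eventually (eventually_ge_atTop (2:ℝ))).and aux_hr] with x hx
      obtain ⟨h2, heq⟩ := hx
      rw [heq] at h2
      have h1 := aux_one_le (Real.log x)
      have : (2 + Real.sin (Real.log x))⁻¹ ≤ 1 := by
        rw [inv_le_one_iff₀]; right; exact h1
      linarith
    exact (hb.exists).elim (fun _ h => h)
  · intro h
    have hb : ∀ᶠ x : ℝ in atTop, False := by
      filter_upwards [(h.eventually (eventually_le_atBot (-1:ℝ))).and aux_hr] with x hx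
      obtain ⟨h2, heq⟩ := hx
      rw [heq] at h2
      have h1 := aux_one_le (Real.log x)
      have : (0:ℝ) ≤ (2 + Real.sin (Real.log x))⁻¹ := by positivity
      linarith
    exact (hb.exists).elim (fun _ h => h)
end
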